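/- An odd indefinite unimodular symmetric bilinear form on ℤ² is diagonalizable with diagonal entries (+1, -1). -/

import Mathlib

theorem key_aux : ∀ n : ℕ, ∀ a b c : ℤ, a.natAbs ≤ n → Odd a → b ^ 2 - a * c = 1 →
    ∃ p q r s : ℤ, (p * s - q * r = 1 ∨ p * s - q * r = -1) ∧
      a * p ^ 2 + 2 * b * p * r + c * r ^ 2 = 1 ∧
      a * p * q + b * (p * s + q * r) + c * r * s = 0 ∧
      a * q ^ 2 + 2 * b * q * s + c * s ^ 2 = -1 := by
  intro n
  induction n with
  | zero =>
    intro a b c hn hodd hdet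
    have hpar : a % 2 = 1 := Int.odd_iff.mp hodd
    omega
  | succ n ih =>
    intro a b c hn hodd hdet
    have hpar : a % 2 = 1 := Int.odd_iff.mp hodd
    by_cases hsmall : a.natAbs ≤ 1
    · have : a = 1 ∨ a = -1 := by omega
      rcases this with rfl | rfl
      · exact ⟨1, -b, 0, 1, Or.inl (by ring), by ring,
          by ring, by linear_combination -hdet⟩
      · exact ⟨b, 1, 1, 0, Or.inr (by ring), by linear_combination hdet,
          by ring, by ring⟩
    · -- inductive step: |a| ≥ 3
      have ha0 : a ≠ 0 := by omega
      have hna : (a.natAbs : ℤ) = |a| := (Int.abs_eq_natAbs a).symm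
      have habs3 : 3 ≤ |a| := by omega
      have haodd : Odd |a| := by
        rcases abs_choice a with h | h <;> rw [h]
        · exact hodd
        · exact hodd.neg
      obtain ⟨A2, hA2⟩ := haodd
      -- choose b' ≡ b (mod a), b' even, |b'| ≤ |a| - 1
      obtain ⟨b', hb'even, hb'dvd, hb'bound⟩ :
          ∃ b' : ℤ, Even b' ∧ a ∣ b - b' ∧ |b'| ≤ |a| - 1 := by
        by_cases h : Even (b % a)
        · refine ⟨b % a, h, (Int.mod_modEq b a).dvd, ?_⟩
          have h1 : 0 ≤ b % a := Int.emod_nonneg b ha0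
          have h2 : b % a < |a| := Int.emod_lt_abs b ha0
          rw [abs_of_nonneg h1]; omega
        · refine ⟨b % a - |a|, ?_, ?_, ?_⟩
          · exact (Int.not_even_iff_odd.mp h).sub_odd ⟨A2, hA2⟩
          · have h2 : a ∣ |a| := self_dvd_abs a
            have h3 : b - (b % a - |a|) = (b - b % a) + |a| := by ring
            rw [h3]
            exact dvd_add ((Int.mod_modEq b a).dvd) h2
          · have h1 : 0 ≤ b % a := Int.emod_nonneg b ha0
            have h2 : b % a < |a| := Int.emod_lt_abs b ha0
            have h4 : b % a ≠ 0 := by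
              rintro h4; exact h (h4 ▸ (by norm_num : Even (0:ℤ)))
            rw [abs_of_nonpos (by omega)]; omega
      obtain ⟨t, ht⟩ : ∃ t : ℤ, b' = b + a * t := by
        obtain ⟨u, hu⟩ := hb'dvd; exact ⟨-u, by linear_combination -hu⟩
      subst ht
      obtain ⟨c', hc'⟩ : ∃ c' : ℤ, c' = c + 2 * b * t + a * t ^ 2 := ⟨_, rfl⟩
      have hac' : a * c' = (b + a * t) ^ 2 - 1 := by
        rw [hc']; linear_combination -hdet
      have hc'odd : Odd c' := by
        have h1 : Odd (a * c') := by
          rw [hac']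
          obtain ⟨k, hk⟩ := hb'even
          exact ⟨2 * k ^ 2 - 1, by rw [hk]; ring⟩
        exact (Int.odd_mul.mp h1).2
      have hc'bound : c'.natAbs ≤ n := by
        have h1 : |a| * |c'| = |(b + a * t) ^ 2 - 1| := by rw [← abs_mul, hac']
        have h2 : |(b + a * t) ^ 2 - 1| ≤ |a| * (|a| - 2) := by
          by_cases hb0 : b + a * t = 0
          · rw [hb0]; norm_num; nlinarith
          · have h5 : 1 ≤ |b + a * t| := Int.one_le_abs hb0
            have h6 : 1 ≤ (b + a * t) ^ 2 := by nlinarith [sq_abs (b + a * t)]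
            rw [abs_of_nonneg (by linarith [h6])]
            nlinarith [sq_abs (b + a * t), abs_nonneg (b + a * t)]
        have h3 : |c'| ≤ |a| - 2 :=
          le_of_mul_le_mul_left (by rw [h1]; exact h2) (by omega)
        have h5 : (c'.natAbs : ℤ) = |c'| := (Int.abs_eq_natAbs c').symm
        omega
      have hdet' : (-(b + a * t)) ^ 2 - c' * a = 1 := by linear_combination -hac'
      obtain ⟨p₁, q₁, r₁, s₁, hD, h1, h2, h3⟩ := ih c' (-(b + a * t)) a hc'bound hc'odd hdet'
      subst hc'
      refine ⟨r₁ - t * p₁, s₁ - t * q₁, -p₁, -q₁, ?_, ?_, ?_, ?_⟩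
      · rcases hD with h | h
        · left; linear_combination h
        · right; linear_combination h
      · linear_combination h1
      · linear_combination h2
      · linear_combination h3

/-- An odd indefinite unimodular symmetric bilinear form on `ℤ²` is
diagonalizable with diagonal entries `(+1, -1)`. -/
theorem odd_indefinite_unimodular_rank_two_diagonalizable
    (B : LinearMap.BilinForm ℤ (Fin 2 → ℤ))
    (hsymm : ∀ x y, B x y = B y x)
    (hunimod : (Matrix.of fun i j => B (Pi.single i 1) (Pi.single j 1)).det = 1 ∨
               (Matrix.of fun i j => B (Pi.single i 1) (Pi.single j 1)).det = -1)
    (hodd : ∃ x, Odd (B x x))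
    (hindef : (∃ x, 0 < B x x) ∧ (∃ y, B y y < 0)) :
    ∃ f : (Fin 2 → ℤ) ≃ₗ[ℤ] (Fin 2 → ℤ),
      ∀ x y, B (f x) (f y) = x 0 * y 0 - x 1 * y 1 := by
  set a : ℤ := B (Pi.single 0 1) (Pi.single 0 1) with ha
  set b : ℤ := B (Pi.single 0 1) (Pi.single 1 1) with hb
  set c : ℤ := B (Pi.single 1 1) (Pi.single 1 1) with hc
  -- expansion of B
  have hdecomp : ∀ u : Fin 2 → ℤ,
      u = u 0 • (Pi.single 0 1 : Fin 2 → ℤ) + u 1 • (Pi.single 1 1 : Fin 2 → ℤ) := by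
    intro u; funext i; fin_cases i <;> simp [Pi.single_apply]
  have hB : ∀ u v : Fin 2 → ℤ,
      B u v = a * (u 0 * v 0) + b * (u 0 * v 1) + b * (u 1 * v 0) + c * (u 1 * v 1) := by
    intro u v
    conv_lhs => rw [hdecomp u]
    conv_lhs => rw [hdecomp v]
    simp only [map_add, map_smul, LinearMap.add_apply, LinearMap.smul_apply,
      smul_eq_mul]
    rw [hsymm (Pi.single 1 1) (Pi.single 0 1)]
    rw [← ha, ← hb, ← hc]
    ring
  -- determinant
  have hdet : a * c - b * b = 1 ∨ a * c - b * b = -1 := by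
    have h := hunimod
    rw [Matrix.det_fin_two] at h
    simp only [Matrix.of_apply] at h
    rw [hsymm (Pi.single 1 1) (Pi.single 0 1)] at h
    exact h
  -- indefinite rules out det = 1
  obtain ⟨⟨x, hx⟩, ⟨y, hy⟩⟩ := hindef
  rw [hB x x] at hx
  rw [hB y y] at hy
  have hdet1 : b ^ 2 - a * c = 1 := by
    rcases hdet with h | h
    · exfalso
      have hax : 0 ≤ a * (a * (x 0 * x 0) + b * (x 0 * x 1) + b * (x 1 * x 0) + c * (x 1 * x 1)) := by
        nlinarith [sq_nonneg (a * x 0 + b * x 1), sq_nonneg (x 1)]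
      have hay : 0 ≤ a * (a * (y 0 * y 0) + b * (y 0 * y 1) + b * (y 1 * y 0) + c * (y 1 * y 1)) := by
        nlinarith [sq_nonneg (a * y 0 + b * y 1), sq_nonneg (y 1)]
      have ha1 : a ≤ 0 := by nlinarith
      have ha2 : 0 ≤ a := by nlinarith
      have ha0 : a = 0 := le_antisymm ha1 ha2
      rw [ha0] at h
      nlinarith [sq_nonneg b]
    · linarith
  -- oddness of a or c
  have hoddac : Odd a ∨ Odd c := by
    by_contra hcon
    push_neg at hcon
    obtain ⟨z, hz⟩ := hodd
    rw [hB z z] at hz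
    obtain ⟨ha2, hc2⟩ := hcon
    rw [Int.not_odd_iff_even] at ha2 hc2
    obtain ⟨a2, ha2⟩ := ha2
    obtain ⟨c2, hc2⟩ := hc2
    have : Even (a * (z 0 * z 0) + b * (z 0 * z 1) + b * (z 1 * z 0) + c * (z 1 * z 1)) :=
      ⟨a2 * (z 0 * z 0) + b * (z 0 * z 1) + c2 * (z 1 * z 1),
        by rw [ha2, hc2]; ring⟩
    exact (Int.not_odd_iff_even.mpr this) hz
  -- get the diagonalizing matrix entries
  obtain ⟨p, q, r, s, hD, h1, h2, h3⟩ :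
      ∃ p q r s : ℤ, (p * s - q * r = 1 ∨ p * s - q * r = -1) ∧
        a * p ^ 2 + 2 * b * p * r + c * r ^ 2 = 1 ∧
        a * p * q + b * (p * s + q * r) + c * r * s = 0 ∧
        a * q ^ 2 + 2 * b * q * s + c * s ^ 2 = -1 := by
    rcases hoddac with hA | hC
    · exact key_aux a.natAbs a b c le_rfl hA hdet1
    · obtain ⟨p, q, r, s, hD, h1, h2, h3⟩ :=
        key_aux c.natAbs c b a le_rfl hC (by linarith)
      refine ⟨r, s, p, q, ?_, by linarith, by linarith, by linarith⟩
      rcases hD with h | h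
      · right; linarith
      · left; linarith
  -- build the linear equivalence
  have hεsq : (p * s - q * r) * (p * s - q * r) = 1 := by
    rcases hD with h | h <;> rw [h] <;> ring
  refine ⟨{
    toFun := fun x => ![p * x 0 + q * x 1, r * x 0 + s * x 1]
    invFun := fun y => ![(p * s - q * r) * (s * y 0 - q * y 1), (p * s - q * r) * (p * y 1 - r * y 0)]
    map_add' := by intro x y; funext i; fin_cases i <;> simp <;> ring
    map_smul' := by intro m x; funext i; fin_cases i <;> simp <;> ring
    left_inv := by
      intro x; funext i; fin_cases i <;> simp
      · linear_combination x 0 * hεsq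
      · linear_combination x 1 * hεsq
    right_inv := by
      intro y; funext i; fin_cases i <;> simp
      · linear_combination y 0 * hεsq
      · linear_combination y 1 * hεsq
  }, ?_⟩
  intro x y
  simp only [LinearEquiv.coe_mk, Equiv.coe_fn_mk, LinearMap.coe_mk, AddHom.coe_mk]
  rw [hB]
  simp only [Matrix.cons_val_zero, Matrix.cons_val_one, Matrix.head_cons]
  linear_combination (x 0 * y 0) * h1 + (x 0 * y 1 + x 1 * y 0) * h2 + (x 1 * y 1) * h3
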